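/- For m ≥ n ≥ 2, any two distinct rows of the queen's graph Q_{m,n} are joined by at least 2(m - n + 1) diagonal edges. Consequently, if U ⊆ V(Q_{m,n}) contains an entire row and its complement contains an entire row, then |E(U, U^c)| ≥ (n-1)m + 2(m-n+1) ≥ (m-1)n + 2. -/

import Mathlib

/-- The queen's graph on an `m × n` board: vertices are `Fin m × Fin n`
(`m` columns and `n` rows), and two distinct vertices are adjacent iff they
share a row, share a column, or lie on a common diagonal of slope `±1`. -/
def Q (m n : ℕ) : SimpleGraph (Fin m × Fin n) where
  Adj u v := u ≠ v ∧ (u.1 = v.1 ∨ u.2 = v.2 ∨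
    ((u.1.1 : ℤ) - v.1.1 = (u.2.1 : ℤ) - v.2.1) ∨
    ((u.1.1 : ℤ) - v.1.1 = (v.2.1 : ℤ) - u.2.1))
  symm := ⟨by
    rintro u v ⟨hne, h⟩
    refine ⟨hne.symm, ?_⟩
    rcases h with h | h | h | h
    · exact Or.inl h.symm
    · exact Or.inr (Or.inl h.symm)
    · exact Or.inr (Or.inr (Or.inl (by omega)))
    · exact Or.inr (Or.inr (Or.inr (by omega)))⟩
  loopless := ⟨fun v h => h.1 rfl⟩

instance (m n : ℕ) : DecidableRel (Q m n).Adj := fun u v =>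
  inferInstanceAs (Decidable (u ≠ v ∧ (u.1 = v.1 ∨ u.2 = v.2 ∨
    ((u.1.1 : ℤ) - v.1.1 = (u.2.1 : ℤ) - v.2.1) ∨
    ((u.1.1 : ℤ) - v.1.1 = (v.2.1 : ℤ) - u.2.1))))

/-- For `m ≥ n ≥ 2`: any two distinct rows of `Q m n` are joined by at least
`2(m - n + 1)` diagonal edges, and consequently, if `U` contains an entire row
and its complement contains an entire row, then the cut `E(U, Uᶜ)` has at least
`(n-1)m + 2(m-n+1) ≥ (m-1)n + 2` edges. -/
theorem queen_row_cut_bound (m n : ℕ) (hn : 2 ≤ n) (hmn : n ≤ m) :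
    (∀ r s : Fin n, r ≠ s →
      2 * (m - n + 1) ≤ (Finset.univ.filter (fun p : Fin m × Fin m =>
        ((p.1.1 : ℤ) - p.2.1 = (r.1 : ℤ) - s.1 ∨
         (p.1.1 : ℤ) - p.2.1 = (s.1 : ℤ) - r.1))).card) ∧
    (∀ U : Finset (Fin m × Fin n),
      (∃ r : Fin n, ∀ a : Fin m, (a, r) ∈ U) →
      (∃ r : Fin n, ∀ a : Fin m, (a, r) ∉ U) →
      (n - 1) * m + 2 * (m - n + 1) ≤
        ((U ×ˢ Uᶜ).filter (fun p => (Q m n).Adj p.1 p.2)).card) ∧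
    (m - 1) * n + 2 ≤ (n - 1) * m + 2 * (m - n + 1) := by
  have hm : 0 < m := by omega
  have part1 : ∀ r s : Fin n, r ≠ s →
      2 * (m - n + 1) ≤ (Finset.univ.filter (fun p : Fin m × Fin m =>
        ((p.1.1 : ℤ) - p.2.1 = (r.1 : ℤ) - s.1 ∨
         (p.1.1 : ℤ) - p.2.1 = (s.1 : ℤ) - r.1))).card := by
    intro r s hrs
    have hrs' : r.1 ≠ s.1 := fun h => hrs (Fin.ext h)
    have hr2 := r.2; have hs2 := s.2
    set e := max r.1 s.1 - min r.1 s.1 with he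
    have he1 : 1 ≤ e := by omega
    have he2 : e ≤ n - 1 := by omega
    have hcase : ((r.1:ℤ) - s.1 = e ∨ (s.1:ℤ) - r.1 = e) := by omega
    have key := Finset.card_le_card_of_injOn
      (f := fun p : ℕ × Bool =>
        if p.2 then ((⟨(p.1+e) % m, Nat.mod_lt _ hm⟩ : Fin m), (⟨p.1 % m, Nat.mod_lt _ hm⟩ : Fin m))
        else ((⟨p.1 % m, Nat.mod_lt _ hm⟩ : Fin m), (⟨(p.1+e) % m, Nat.mod_lt _ hm⟩ : Fin m)))
      (s := (Finset.range (m-n+1)) ×ˢ (Finset.univ : Finset Bool))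
      (t := (Finset.univ.filter (fun p : Fin m × Fin m =>
          ((p.1.1 : ℤ) - p.2.1 = (r.1 : ℤ) - s.1 ∨
           (p.1.1 : ℤ) - p.2.1 = (s.1 : ℤ) - r.1))))
      ?_ ?_
    · calc 2 * (m - n + 1) = (Finset.range (m-n+1) ×ˢ (Finset.univ : Finset Bool)).card := by
            simp [Finset.card_product]; ring
        _ ≤ _ := key
    · rintro ⟨i, b⟩ hib
      simp only [Finset.mem_coe, Finset.mem_product, Finset.mem_range] at hib
      have hie : i + e < m := by omega
      have h1 : (i + e) % m = i + e := Nat.mod_eq_of_lt hie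
      have h2 : i % m = i := Nat.mod_eq_of_lt (by omega)
      cases b <;> simp only [if_true, if_false, Bool.false_eq_true, Finset.mem_coe, Finset.mem_filter,
        Finset.mem_univ, true_and, h1, h2] <;> push_cast [h1, h2] <;> omega
    · rintro ⟨i, b⟩ hib ⟨i', b'⟩ hib' hEq
      simp only [Finset.mem_product, Finset.mem_range, Finset.mem_coe] at hib hib'
      have h1 : (i + e) % m = i + e := Nat.mod_eq_of_lt (by omega)
      have h2 : i % m = i := Nat.mod_eq_of_lt (by omega)
      have h1' : (i' + e) % m = i' + e := Nat.mod_eq_of_lt (by omega)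
      have h2' : i' % m = i' := Nat.mod_eq_of_lt (by omega)
      cases b <;> cases b' <;>
        simp only [if_true, if_false, Bool.false_eq_true, Prod.mk.injEq, Fin.mk.injEq,
          h1, h2, h1', h2'] at hEq <;>
        simp_all <;> omega
  refine ⟨part1, ?_, ?_⟩
  · rintro U ⟨r, hr⟩ ⟨s, hs⟩
    have hrs : r ≠ s := by
      intro h; exact hs ⟨0, hm⟩ (h ▸ hr ⟨0, hm⟩)
    set S := ((U ×ˢ Uᶜ).filter (fun p => (Q m n).Adj p.1 p.2)) with hS
    set A := S.filter (fun p => p.1.1 = p.2.1) with hA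
    set B := S.filter (fun p => p.1.1 ≠ p.2.1 ∧ p.1.2 = r ∧ p.2.2 = s) with hB
    have hdisj : Disjoint A B := by
      rw [Finset.disjoint_left]
      intro p hpA hpB
      rw [hA, Finset.mem_filter] at hpA
      rw [hB, Finset.mem_filter] at hpB
      exact hpB.2.1 hpA.2
    have hsub : A ∪ B ⊆ S :=
      Finset.union_subset (Finset.filter_subset _ _) (Finset.filter_subset _ _)
    have hcards : A.card + B.card ≤ S.card := by
      rw [← Finset.card_union_of_disjoint hdisj]
      exact Finset.card_le_card hsub
    -- B bound
    have hBcard : 2 * (m - n + 1) ≤ B.card := by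
      refine le_trans (part1 r s hrs) ?_
      refine Finset.card_le_card_of_injOn
        (fun p : Fin m × Fin m => ((p.1, r), (p.2, s))) ?_ ?_
      · rintro ⟨a, b⟩ hab
        simp only [Finset.mem_coe, Finset.mem_filter, Finset.mem_univ, true_and] at hab
        have hab' : a.1 ≠ b.1 := by
          have hrs' : r.1 ≠ s.1 := fun h => hrs (Fin.ext h)
          rcases hab with h | h <;> omega
        have habf : a ≠ b := fun h => hab' (congrArg Fin.val h)
        rw [Finset.mem_coe, hB, Finset.mem_filter, hS, Finset.mem_filter, Finset.mem_product]
        refine ⟨⟨⟨hr a, Finset.mem_compl.2 (hs b)⟩, ?_⟩, habf, rfl, rfl⟩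
        refine ⟨?_, Or.inr (Or.inr ?_)⟩
        · intro h; exact habf (congrArg Prod.fst h)
        · rcases hab with h | h
          · exact Or.inl h
          · exact Or.inr h
      · rintro ⟨a, b⟩ _ ⟨a', b'⟩ _ hEq
        simp only [Prod.mk.injEq] at hEq
        exact Prod.ext hEq.1.1 hEq.2.1
    -- A bound
    have hAcol : ∀ a : Fin m, n - 1 ≤ (A.filter (fun p => p.1.1 = a)).card := by
      intro a
      set Va := Finset.univ.filter (fun j : Fin n => (a, j) ∈ U) with hVa
      have hinj : (Va ×ˢ Vaᶜ).card ≤ (A.filter (fun p => p.1.1 = a)).card := by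
        refine Finset.card_le_card_of_injOn
          (fun q : Fin n × Fin n => ((a, q.1), (a, q.2))) ?_ ?_
        · rintro ⟨i, j⟩ hij
          simp only [Finset.mem_coe, Finset.mem_product, Finset.mem_compl, hVa, Finset.mem_filter,
            Finset.mem_univ, true_and] at hij
          obtain ⟨hiU, hjU⟩ := hij
          have hij' : i ≠ j := by rintro rfl; exact hjU hiU
          rw [Finset.mem_coe, Finset.mem_filter, hA, Finset.mem_filter, hS, Finset.mem_filter,
            Finset.mem_product]
          refine ⟨⟨⟨⟨hiU, Finset.mem_compl.2 hjU⟩, ?_⟩, rfl⟩, rfl⟩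
          exact ⟨fun h => hij' (congrArg Prod.snd h), Or.inl rfl⟩
        · rintro ⟨i, j⟩ _ ⟨i', j'⟩ _ hEq
          simp only [Prod.mk.injEq] at hEq
          exact Prod.ext hEq.1.2 hEq.2.2
      have hcompl : Vaᶜ.card = n - Va.card := by
        rw [Finset.card_compl]; simp
      have hk1 : 1 ≤ Va.card := Finset.card_pos.2 ⟨r, by simp [hVa, hr a]⟩
      have hk2 : Va.card ≤ n - 1 := by
        have : Va ⊆ Finset.univ.erase s := by
          intro j hj
          simp only [hVa, Finset.mem_filter, Finset.mem_univ, true_and] at hj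
          refine Finset.mem_erase.2 ⟨?_, Finset.mem_univ _⟩
          rintro rfl; exact hs a hj
        have := Finset.card_le_card this
        simpa [Finset.card_erase_of_mem] using this
      refine le_trans ?_ hinj
      rw [Finset.card_product, hcompl]
      obtain ⟨k', hk'⟩ : ∃ k', Va.card = k' + 1 := ⟨Va.card - 1, by omega⟩
      obtain ⟨j', hj'⟩ : ∃ j', n - Va.card = j' + 1 := ⟨n - Va.card - 1, by omega⟩
      calc n - 1 ≤ k' + j' + 1 := by omega
        _ ≤ (k' + 1) * (j' + 1) := by nlinarith
        _ = Va.card * (n - Va.card) := by rw [hj', hk']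
    have hAcard : (n - 1) * m ≤ A.card := by
      have hfib := Finset.card_eq_sum_card_fiberwise
        (f := fun p : (Fin m × Fin n) × (Fin m × Fin n) => p.1.1) (s := A)
        (t := Finset.univ) (fun x _ => Finset.mem_univ _)
      rw [hfib]
      calc (n - 1) * m = ∑ _a : Fin m, (n - 1) := by
            simp [Finset.sum_const, mul_comm]
        _ ≤ ∑ a : Fin m, (A.filter (fun p => p.1.1 = a)).card :=
            Finset.sum_le_sum (fun a _ => hAcol a)
    omega
  · obtain ⟨m', rfl⟩ : ∃ m', m = m' + n := ⟨m - n, by omega⟩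
    obtain ⟨n', rfl⟩ : ∃ n', n = n' + 2 := ⟨n - 2, by omega⟩
    have h1 : m' + (n' + 2) - 1 = m' + n' + 1 := by omega
    have h2 : n' + 2 - 1 = n' + 1 := by omega
    have h3 : m' + (n' + 2) - (n' + 2) + 1 = m' + 1 := by omega
    rw [h1, h2, h3]
    nlinarith
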